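/- Let k be a commutative ring, C a category, and F, G, H : C ⥤ ModuleCat k functors. Let ι : G ⟶ F be a natural transformation all of whose components are injective, and π : F ⟶ H a natural transformation all of whose components are surjective. Let Q : G ⟶ H be the natural transformation with components Q_V = π_V ∘ ι_V. Then Q is a natural isomorphism if and only if there exists a natural transformation P : F ⟶ F such that for every object V of C: (i) P_V ∘ ι_V = ι_V; (ii) π_V ∘ P_V = π_V; (iii) the range of P_V is contained in the range of ι_V; (iv) the kernel of π_V is contained in the kernel of P_V. Furthermore, if these hold then P_V ∘ P_V = P_V for every object V. -/

import Mathlib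

open CategoryTheory

/-- Functorial characterization of extremal projectors: given functors `F G H : C ⥤ Mod_k`,
`ι : G ⟶ F` with injective components and `π : F ⟶ H` with surjective components,
the natural transformation `Q = π ∘ ι : G ⟶ H` is a natural isomorphism iff there is a
natural transformation `P : F ⟶ F` with `P ∘ ι = ι`, `π ∘ P = π`, `range P_V ⊆ range ι_V`
and `ker π_V ⊆ ker P_V` at every object `V`; furthermore any such `P` is idempotent. -/
theorem statement7 (k : Type*) [CommRing k] (C : Type*) [Category C]
    (F G H : C ⥤ ModuleCat k) (ι : G ⟶ F) (π : F ⟶ H)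
    (hι : ∀ V : C, Function.Injective (ι.app V))
    (hπ : ∀ V : C, Function.Surjective (π.app V)) :
    (IsIso (ι ≫ π) ↔
      ∃ P : F ⟶ F, ∀ V : C,
        ι.app V ≫ P.app V = ι.app V ∧
        P.app V ≫ π.app V = π.app V ∧
        LinearMap.range (P.app V).hom ≤ LinearMap.range (ι.app V).hom ∧
        LinearMap.ker (π.app V).hom ≤ LinearMap.ker (P.app V).hom) ∧
    (∀ P : F ⟶ F,
      (∀ V : C,
        ι.app V ≫ P.app V = ι.app V ∧
        P.app V ≫ π.app V = π.app V ∧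
        LinearMap.range (P.app V).hom ≤ LinearMap.range (ι.app V).hom ∧
        LinearMap.ker (π.app V).hom ≤ LinearMap.ker (P.app V).hom) →
      ∀ V : C, P.app V ≫ P.app V = P.app V) := by
  have capp : ∀ {A B D : ModuleCat k} (f : A ⟶ B) (g : B ⟶ D) (x : A),
      (f ≫ g) x = g (f x) := fun _ _ _ => rfl
  have happ : ∀ {A B : ModuleCat k} (f g : A ⟶ B), f = g → ∀ x : A, f x = g x :=
    fun f g h x => by rw [h]
  constructor
  · constructor
    · intro hQ
      refine ⟨π ≫ inv (ι ≫ π) ≫ ι, fun V => ?_⟩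
      have h1 : (ι ≫ π) ≫ inv (ι ≫ π) = 𝟙 G := IsIso.hom_inv_id _
      have h2 : inv (ι ≫ π) ≫ (ι ≫ π) = 𝟙 H := IsIso.inv_hom_id _
      have h1V := congrArg (fun t => NatTrans.app t V) h1
      have h2V := congrArg (fun t => NatTrans.app t V) h2
      simp only [NatTrans.comp_app, NatTrans.id_app] at h1V h2V
      have h1V' : ι.app V ≫ π.app V ≫ (inv (ι ≫ π)).app V = 𝟙 (G.obj V) := by
        rw [← Category.assoc]; exact h1V
      refine ⟨?_, ?_, ?_, ?_⟩
      · simp only [NatTrans.comp_app, ← Category.assoc]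
        rw [Category.assoc (ι.app V), ← Category.assoc (ι.app V), Category.assoc (ι.app V),
          h1V', Category.id_comp]
      · simp only [NatTrans.comp_app, Category.assoc]
        rw [h2V, Category.comp_id]
      · intro x hx
        obtain ⟨y, rfl⟩ := hx
        refine ⟨(inv (ι ≫ π)).app V (π.app V y), ?_⟩
        show ι.app V ((inv (ι ≫ π)).app V (π.app V y)) = ((π ≫ inv (ι ≫ π) ≫ ι).app V) y
        rw [NatTrans.comp_app, NatTrans.comp_app, capp, capp]
      · intro x hx
        replace hx : π.app V x = 0 := hx
        show ((π ≫ inv (ι ≫ π) ≫ ι).app V) x = 0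
        rw [NatTrans.comp_app, NatTrans.comp_app, capp, capp, hx, map_zero, map_zero]
    · rintro ⟨P, hP⟩
      haveI : ∀ X : C, IsIso ((ι ≫ π).app X) := by
        intro V
        obtain ⟨hPι, hπP, hrange, hker⟩ := hP V
        rw [ConcreteCategory.isIso_iff_bijective]
        constructor
        · intro x y hxy
          have hxy' : π.app V (ι.app V x) = π.app V (ι.app V y) := hxy
          apply hι V
          have hx : π.app V (ι.app V x - ι.app V y) = 0 := by
            simp [hxy']
          have hk := hker hx
          simp only [LinearMap.mem_ker, map_sub, sub_eq_zero] at hk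
          calc ι.app V x = P.app V (ι.app V x) := (happ _ _ hPι x).symm
            _ = P.app V (ι.app V y) := hk
            _ = ι.app V y := happ _ _ hPι y
        · intro h
          obtain ⟨z, rfl⟩ := hπ V h
          obtain ⟨y, hy⟩ := hrange ⟨z, rfl⟩
          refine ⟨y, ?_⟩
          show π.app V (ι.app V y) = π.app V z
          rw [hy]
          exact happ _ _ hπP z
      exact NatIso.isIso_of_isIso_app _
  · intro P hP V
    obtain ⟨hPι, _, hrange, _⟩ := hP V
    ext x
    obtain ⟨y, hy⟩ := hrange ⟨x, rfl⟩
    show P.app V (P.app V x) = P.app V x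
    rw [← hy]
    exact happ _ _ hPι y
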